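/- In the Case II setting, let I be the two-sided *-ideal of Pol(O_F^+) generated by all entries of the blocks C_{μν} with (μ,ν) ≠ (r,r) and all entries of the blocks A_{μν} with μ ≠ ν. Then Pol(O_F^+)/I is *-isomorphic to the universal unital complex *-algebra generated by families a^{(ν)}_{jk} (ν = 1,…,r−1, 1 ≤ j,k ≤ M_ν) and v_{jk} (1 ≤ j,k ≤ 2M_r) subject to: for each ν ≤ r−1, both A_ν = (a^{(ν)}_{jk}) and conj(A_ν) are unitary; and V = (v_{jk}) is unitary with V = J·conj(V)·J^{-1}, where J = [[0, I_{M_r}],[−I_{M_r}, 0]]. The isomorphism sends the class of an entry of A_{νν} (ν ≤ r−1) to the corresponding a^{(ν)}_{jk}, the class of an entry of A_{rr} to the corresponding entry of the upper-left M_r×M_r block of V, and the class of an entry of C_{rr} to the corresponding entry of the lower-left M_r×M_r block of V. (This presented algebra is the free product (⋆_{ν=1}^{r−1} Pol(U_{M_ν}^+)) ⋆ Pol(O_J^+).) -/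

import Mathlib

open scoped ComplexOrder

/-- The defining relations of `Pol(O_F⁺)`: `U` is unitary and `U·F = F·conj(U)`
(equivalently `U = F·conj(U)·F⁻¹`). -/
def OrthRel {ι : Type} [Fintype ι] [DecidableEq ι] {A : Type} [Ring A] [Algebra ℂ A]
    [StarRing A] (F : Matrix ι ι ℂ) (u : Matrix ι ι A) : Prop :=
  u * u.conjTranspose = 1 ∧ u.conjTranspose * u = 1 ∧
    u * F.map (algebraMap ℂ A) = F.map (algebraMap ℂ A) * u.map star

/-- A presentation of the universal unital complex *-algebra `Pol(O_F⁺)`: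
a unital complex *-algebra carrying a matrix of generators `u` satisfying the
defining relations, universal among all such. -/
structure PolO {ι : Type} [Fintype ι] [DecidableEq ι] (F : Matrix ι ι ℂ) where
  carrier : Type
  [isRing : Ring carrier]
  [isAlgebra : Algebra ℂ carrier]
  [isStarRing : StarRing carrier]
  [isStarModule : StarModule ℂ carrier]
  u : Matrix ι ι carrier
  rel : OrthRel F u
  universal : ∀ (B : Type) [Ring B] [Algebra ℂ B] [StarRing B] [StarModule ℂ B]
      (v : Matrix ι ι B), OrthRel F v →
      ∃! φ : carrier →⋆ₐ[ℂ] B, ∀ j k, φ (u j k) = v j k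

attribute [instance] PolO.isRing PolO.isAlgebra PolO.isStarRing PolO.isStarModule

/-- The defining relations of `Pol(U_N⁺)`: both `U` and `conj(U)` are unitary. -/
def BiUnitary {ι : Type} [Fintype ι] [DecidableEq ι] {A : Type} [Ring A] [Algebra ℂ A]
    [StarRing A] (u : Matrix ι ι A) : Prop :=
  u * u.conjTranspose = 1 ∧ u.conjTranspose * u = 1 ∧
    u.map star * (u.map star).conjTranspose = 1 ∧ (u.map star).conjTranspose * u.map star = 1

/-- A presentation of the universal unital complex *-algebra `Pol(U_N⁺)` (`N = #ι`). -/
structure PolU (ι : Type) [Fintype ι] [DecidableEq ι] where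
  carrier : Type
  [isRing : Ring carrier]
  [isAlgebra : Algebra ℂ carrier]
  [isStarRing : StarRing carrier]
  [isStarModule : StarModule ℂ carrier]
  u : Matrix ι ι carrier
  rel : BiUnitary u
  universal : ∀ (B : Type) [Ring B] [Algebra ℂ B] [StarRing B] [StarModule ℂ B]
      (v : Matrix ι ι B), BiUnitary v →
      ∃! φ : carrier →⋆ₐ[ℂ] B, ∀ j k, φ (u j k) = v j k

attribute [instance] PolU.isRing PolU.isAlgebra PolU.isStarRing PolU.isStarModule

/-- A unital complex *-algebra is RFD if finite-dimensional *-representations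
separate its points. -/
def IsRFD (A : Type) [Ring A] [Algebra ℂ A] [StarRing A] : Prop :=
  ∀ a : A, a ≠ 0 → ∃ (n : ℕ) (π : A →⋆ₐ[ℂ] Matrix (Fin n) (Fin n) ℂ), π a ≠ 0

/-- A tracial state on a unital complex *-algebra. -/
structure TracialState (A : Type) [Ring A] [Algebra ℂ A] [StarRing A] where
  toFun : A →ₗ[ℂ] ℂ
  map_one' : toFun 1 = 1
  nonneg' : ∀ a : A, 0 ≤ toFun (star a * a)
  tracial' : ∀ a b : A, toFun (a * b) = toFun (b * a)

/-- The Kac ideal: elements killed by `τ(a^* a)` for every tracial state `τ`. -/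
def kacIdeal (A : Type) [Ring A] [Algebra ℂ A] [StarRing A] : Set A :=
  {a : A | ∀ τ : TracialState A, τ.toFun (star a * a) = 0}

/-- The RFD ideal: the intersection of the kernels of all finite-dimensional
*-representations. -/
def rfdIdeal (A : Type) [Ring A] [Algebra ℂ A] [StarRing A] : Set A :=
  {a : A | ∀ (n : ℕ) (π : A →⋆ₐ[ℂ] Matrix (Fin n) (Fin n) ℂ), π a = 0}

/-- A subset of a *-ring which is a two-sided ideal closed under the star operation. -/
def IsStarIdeal {A : Type} [Ring A] [StarRing A] (T : Set A) : Prop :=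
  (0 : A) ∈ T ∧ (∀ a b, a ∈ T → b ∈ T → a + b ∈ T) ∧
    (∀ x a, a ∈ T → x * a ∈ T ∧ a * x ∈ T) ∧ (∀ a, a ∈ T → star a ∈ T)

/-- The two-sided *-ideal generated by a set. -/
def starIdealSpan {A : Type} [Ring A] [StarRing A] (S : Set A) : Set A :=
  ⋂₀ {T : Set A | IsStarIdeal T ∧ S ⊆ T}

/-- The index set in the Case II setting: for each `ν = 1,…,r` a block `P_ν ⊕ Q_ν`
of size `2M_ν`. -/
abbrev CaseIIIdx (r : ℕ) (M : Fin r → ℕ) : Type := Σ ν : Fin r, (Fin (M ν) ⊕ Fin (M ν))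

/-- The Case II matrix `F`: block-diagonal with blocks
`[[0, q_ν·I_{M_ν}], [−q_ν⁻¹·I_{M_ν}, 0]]` for `ν = 1,…,r`. -/
noncomputable def FCaseII (r : ℕ) (q : Fin r → ℝ) (M : Fin r → ℕ) :
    Matrix (CaseIIIdx r M) (CaseIIIdx r M) ℂ := fun a b =>
  match a, b with
  | ⟨ν, .inl j⟩, ⟨μ, .inr k⟩ =>
      if ν = μ ∧ (j : ℕ) = (k : ℕ) then ((q ν : ℝ) : ℂ) else 0
  | ⟨ν, .inr j⟩, ⟨μ, .inl k⟩ =>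
      if ν = μ ∧ (j : ℕ) = (k : ℕ) then ((-(q ν)⁻¹ : ℝ) : ℂ) else 0
  | _, _ => 0

/-- The standard symplectic matrix `J = [[0, I_m], [−I_m, 0]]`, indexed by `Fin m ⊕ Fin m`. -/
def symplJSum (m : ℕ) : Matrix (Fin m ⊕ Fin m) (Fin m ⊕ Fin m) ℂ := fun a b =>
  match a, b with
  | .inl j, .inr k => if (j : ℕ) = (k : ℕ) then 1 else 0
  | .inr j, .inl k => if (j : ℕ) = (k : ℕ) then -1 else 0
  | _, _ => 0

/-- A presentation of the free product `(⋆_{ν=1}^{r−1} Pol(U⁺_{M_ν})) ⋆ Pol(O_J⁺)`: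
the universal unital complex *-algebra generated by families `a⁽ᵛ⁾` (`ν = 1,…,r−1`) with
`A_ν` and `conj(A_ν)` unitary, and `v` with `V` unitary and `V = J·conj(V)·J⁻¹`. -/
structure FreeProdUOSympl (r' : ℕ) (M' : Fin r' → ℕ) (m : ℕ) where
  carrier : Type
  [isRing : Ring carrier]
  [isAlgebra : Algebra ℂ carrier]
  [isStarRing : StarRing carrier]
  [isStarModule : StarModule ℂ carrier]
  a : ∀ ν : Fin r', Matrix (Fin (M' ν)) (Fin (M' ν)) carrier
  v : Matrix (Fin m ⊕ Fin m) (Fin m ⊕ Fin m) carrier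
  rel_a : ∀ ν, BiUnitary (a ν)
  rel_v : OrthRel (symplJSum m) v
  universal : ∀ (B : Type) [Ring B] [Algebra ℂ B] [StarRing B] [StarModule ℂ B]
      (b : ∀ ν : Fin r', Matrix (Fin (M' ν)) (Fin (M' ν)) B)
      (w : Matrix (Fin m ⊕ Fin m) (Fin m ⊕ Fin m) B),
      (∀ ν, BiUnitary (b ν)) → OrthRel (symplJSum m) w →
      ∃! φ : carrier →⋆ₐ[ℂ] B,
        (∀ ν j k, φ (a ν j k) = b ν j k) ∧ ∀ p t, φ (v p t) = w p t

attribute [instance] FreeProdUOSympl.isRing FreeProdUOSympl.isAlgebra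
  FreeProdUOSympl.isStarRing FreeProdUOSympl.isStarModule

section Helpers

variable {A : Type} [Ring A] [StarRing A]

theorem isStarIdeal_univ : IsStarIdeal (Set.univ : Set A) := by
  refine ⟨trivial, fun _ _ _ _ => trivial, fun _ _ _ => ⟨trivial, trivial⟩, fun _ _ => trivial⟩

theorem subset_starIdealSpan (S : Set A) : S ⊆ starIdealSpan S := by
  intro x hx T hT; exact hT.2 hx

theorem starIdealSpan_le {S T : Set A} (hT : IsStarIdeal T) (hS : S ⊆ T) :
    starIdealSpan S ⊆ T := fun x hx => hx T ⟨hT, hS⟩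

theorem isStarIdeal_starIdealSpan (S : Set A) : IsStarIdeal (starIdealSpan S) := by
  refine ⟨fun T hT => hT.1.1, fun a b ha hb T hT => hT.1.2.1 a b (ha T hT) (hb T hT),
    fun x a ha => ⟨fun T hT => (hT.1.2.2.1 x a (ha T hT)).1, fun T hT => (hT.1.2.2.1 x a (ha T hT)).2⟩,
    fun a ha T hT => hT.1.2.2.2 a (ha T hT)⟩

theorem IsStarIdeal.neg_mem {T : Set A} (hT : IsStarIdeal T) {a : A} (ha : a ∈ T) : -a ∈ T := by
  have := (hT.2.2.1 (-1) a ha).1; simpa using this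

theorem IsStarIdeal.sub_mem {T : Set A} (hT : IsStarIdeal T) {a b : A} (ha : a ∈ T) (hb : b ∈ T) :
    a - b ∈ T := by
  have := hT.2.1 a (-b) ha (hT.neg_mem hb); simpa [sub_eq_add_neg] using this

/-- The ring congruence associated to a star ideal. -/
def starIdealRingCon {I : Set A} (hI : IsStarIdeal I) : RingCon A where
  r a b := a - b ∈ I
  iseqv := ⟨fun a => by simpa using hI.1, fun {a b} h => by simpa using hI.neg_mem h,
    fun {a b c} h h' => by have := hI.2.1 _ _ h h'; simpa using this⟩
  add' := fun {a b c d} h h' => by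
    have := hI.2.1 _ _ h h'; simpa [add_sub_add_comm] using this
  mul' := fun {a b c d} h h' => by
    have h1 := (hI.2.2.1 a _ h').1
    have h2 := (hI.2.2.1 d _ h).2
    have := hI.2.1 _ _ h1 h2
    have e : a * (c - d) + (a - b) * d = a * c - b * d := by noncomm_ring
    rwa [e] at this

theorem starIdealRingCon_iff {I : Set A} (hI : IsStarIdeal I) (a b : A) :
    starIdealRingCon hI a b ↔ a - b ∈ I := Iff.rfl

section
variable {A : Type} [Ring A] [Algebra ℂ A] [StarRing A] [StarModule ℂ A]
variable (c : RingCon A) (hstar : ∀ a b, c a b → c (star a) (star b))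

/-- Star on the quotient. -/
def rcStar : Star c.Quotient where
  star := Quotient.map' star (fun a b h => hstar a b h)

lemma rcStar_mk (a : A) : (rcStar c hstar).star (c.mk' a) = c.mk' (star a) := rfl

def rcStarRing : StarRing c.Quotient :=
  letI := rcStar c hstar
  { star_involutive := fun x => by
      induction x using Quotient.inductionOn' with
      | h a => show c.mk' (star (star a)) = c.mk' a; rw [star_star]
    star_mul := fun x y => by
      induction x using Quotient.inductionOn' with
      | h a => induction y using Quotient.inductionOn' with
        | h b =>
          show c.mk' (star (a * b)) = c.mk' (star b) * c.mk' (star a)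
          rw [star_mul, map_mul]
    star_add := fun x y => by
      induction x using Quotient.inductionOn' with
      | h a => induction y using Quotient.inductionOn' with
        | h b =>
          show c.mk' (star (a + b)) = c.mk' (star a) + c.mk' (star b)
          rw [star_add, map_add] }

@[reducible]
noncomputable def rcAlgebra : Algebra ℂ c.Quotient :=
  { algebraMap := (c.mk' : A →+* c.Quotient).comp (algebraMap ℂ A)
    smul := (· • ·)
    commutes' := by
      intro z x
      induction x using Quotient.inductionOn' with
      | h a =>
        show c.mk' (algebraMap ℂ A z) * c.mk' a = c.mk' a * c.mk' (algebraMap ℂ A z)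
        rw [← map_mul, ← map_mul, Algebra.commutes]
    smul_def' := by
      intro z x
      induction x using Quotient.inductionOn' with
      | h a =>
        show (z • (c.mk' a : c.Quotient)) = c.mk' (algebraMap ℂ A z) * c.mk' a
        rw [← map_mul, ← Algebra.smul_def]
        rfl }
end

section
variable {A : Type} [Ring A] [Algebra ℂ A] [StarRing A] [StarModule ℂ A]

structure QuotPkg (A : Type) [Ring A] [Algebra ℂ A] [StarRing A] [StarModule ℂ A]
    (I : Set A) where
  Q : Type
  [ring : Ring Q]
  [alg : Algebra ℂ Q]
  [sr : StarRing Q]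
  [sm : StarModule ℂ Q]
  π : A →⋆ₐ[ℂ] Q
  ker : ∀ a, π a = 0 ↔ a ∈ I

noncomputable def mkQuotPkg {I : Set A} (hI : IsStarIdeal I)
    (hstar : ∀ a b, (starIdealRingCon hI) a b → (starIdealRingCon hI) (star a) (star b)) :
    QuotPkg A I := by
  letI c := starIdealRingCon hI
  letI : StarRing c.Quotient := rcStarRing c hstar
  letI : Algebra ℂ c.Quotient := rcAlgebra c
  have hsmul : ∀ (z : ℂ) (a : A), z • (c.mk' a : c.Quotient) = c.mk' (z • a) := by
    intro z a
    rfl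
  letI : StarModule ℂ c.Quotient := by
    constructor
    intro z x
    induction x using Quotient.inductionOn' with
    | h a =>
      show star (z • (c.mk' a : c.Quotient)) = (starRingEnd ℂ z) • star (c.mk' a : c.Quotient)
      rw [hsmul]
      show c.mk' (star (z • a)) = (starRingEnd ℂ z) • (c.mk' (star a) : c.Quotient)
      rw [hsmul, star_smul]
      rfl
  refine ⟨c.Quotient,
    { toRingHom := c.mk'
      commutes' := fun z => rfl
      map_star' := fun a => rfl }, ?_⟩
  intro a
  constructor
  · intro h
    have h2 : c a 0 := by
      rw [← c.eq]
      exact h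
    have h3 := (starIdealRingCon_iff hI a 0).mp h2
    simpa using h3
  · intro h
    have h2 : c a 0 := (starIdealRingCon_iff hI a 0).mpr (by simpa using h)
    exact (c.eq.mpr h2 : ((a : c.Quotient) = (0 : A)))

end

section Transport
variable {ι : Type} [Fintype ι] [DecidableEq ι] {A B : Type}
  [Ring A] [Algebra ℂ A] [StarRing A] [Ring B] [Algebra ℂ B] [StarRing B]
  (φ : A →⋆ₐ[ℂ] B)

theorem map_algebraMapMatrix (F : Matrix ι ι ℂ) :
    (F.map (algebraMap ℂ A)).map φ = F.map (algebraMap ℂ B) := by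
  ext i j; simp only [Matrix.map_apply]; exact φ.commutes _ |>.symm ▸ rfl

theorem map_starMatrix (u : Matrix ι ι A) :
    (u.map star).map φ = (u.map φ).map star := by
  ext i j; simp [Matrix.map_apply, map_star]

theorem map_conjTransposeMatrix (u : Matrix ι ι A) :
    u.conjTranspose.map φ = (u.map φ).conjTranspose := by
  ext i j; simp [Matrix.conjTranspose_apply, Matrix.map_apply, map_star]

theorem map_oneMatrix : (1 : Matrix ι ι A).map φ = 1 := by
  ext i j
  by_cases h : i = j <;> simp [Matrix.map_apply, Matrix.one_apply, h]

theorem map_mulMatrix (u v : Matrix ι ι A) : (u * v).map φ = u.map φ * v.map φ := by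
  ext i j
  simp [Matrix.map_apply, Matrix.mul_apply]

theorem OrthRel.mapHom {F : Matrix ι ι ℂ} {u : Matrix ι ι A} (h : OrthRel F u) :
    OrthRel F (u.map φ) := by
  obtain ⟨h1, h2, h3⟩ := h
  refine ⟨?_, ?_, ?_⟩
  · rw [← map_conjTransposeMatrix, ← map_mulMatrix, h1, map_oneMatrix]
  · rw [← map_conjTransposeMatrix, ← map_mulMatrix, h2, map_oneMatrix]
  · rw [← map_algebraMapMatrix φ F, ← map_starMatrix, ← map_mulMatrix, h3, map_mulMatrix]

theorem mapMatrix_injective (hφ : Function.Injective φ) :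
    Function.Injective (fun u : Matrix ι ι A => u.map φ) := by
  intro u v h
  ext i j
  exact hφ (congrFun (congrFun h i) j)

theorem OrthRel.of_mapHom (hφ : Function.Injective φ) {F : Matrix ι ι ℂ} {u : Matrix ι ι A}
    (h : OrthRel F (u.map φ)) : OrthRel F u := by
  obtain ⟨h1, h2, h3⟩ := h
  have inj : ∀ {x y : Matrix ι ι A}, x.map φ = y.map φ → x = y :=
    fun h => mapMatrix_injective φ hφ h
  refine ⟨inj ?_, inj ?_, inj ?_⟩
  · rw [map_mulMatrix, map_conjTransposeMatrix, map_oneMatrix]; exact h1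
  · rw [map_mulMatrix, map_conjTransposeMatrix, map_oneMatrix]; exact h2
  · rw [map_mulMatrix, map_mulMatrix, map_algebraMapMatrix, map_starMatrix]; exact h3

theorem BiUnitary.mapHom {u : Matrix ι ι A} (h : BiUnitary u) : BiUnitary (u.map φ) := by
  obtain ⟨h1, h2, h3, h4⟩ := h
  refine ⟨?_, ?_, ?_, ?_⟩
  · rw [← map_conjTransposeMatrix, ← map_mulMatrix, h1, map_oneMatrix]
  · rw [← map_conjTransposeMatrix, ← map_mulMatrix, h2, map_oneMatrix]
  · rw [← map_starMatrix, ← map_conjTransposeMatrix, ← map_mulMatrix, h3, map_oneMatrix]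
  · rw [← map_starMatrix, ← map_conjTransposeMatrix, ← map_mulMatrix, h4, map_oneMatrix]

theorem BiUnitary.of_mapHom (hφ : Function.Injective φ) {u : Matrix ι ι A}
    (h : BiUnitary (u.map φ)) : BiUnitary u := by
  obtain ⟨h1, h2, h3, h4⟩ := h
  have inj : ∀ {x y : Matrix ι ι A}, x.map φ = y.map φ → x = y :=
    fun h => mapMatrix_injective φ hφ h
  refine ⟨inj ?_, inj ?_, inj ?_, inj ?_⟩
  · rw [map_mulMatrix, map_conjTransposeMatrix, map_oneMatrix]; exact h1
  · rw [map_mulMatrix, map_conjTransposeMatrix, map_oneMatrix]; exact h2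
  · rw [map_mulMatrix, map_conjTransposeMatrix, map_starMatrix, map_oneMatrix]; exact h3
  · rw [map_mulMatrix, map_conjTransposeMatrix, map_starMatrix, map_oneMatrix]; exact h4
end Transport

/-- The single-block version of `FCaseII` with parameter `t`. -/
noncomputable def FblkC (t : ℝ) (n : ℕ) : Matrix (Fin n ⊕ Fin n) (Fin n ⊕ Fin n) ℂ :=
  Matrix.fromBlocks 0 (((t : ℝ) : ℂ) • 1) (((-(t)⁻¹ : ℝ) : ℂ) • 1) 0

theorem FCaseII_eq_blockDiagonal' (r : ℕ) (q : Fin r → ℝ) (M : Fin r → ℕ) :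
    FCaseII r q M = Matrix.blockDiagonal' (fun ν => FblkC (q ν) (M ν)) := by
  ext ⟨ν, x⟩ ⟨μ, y⟩
  by_cases h : ν = μ
  · subst h
    rw [Matrix.blockDiagonal'_apply_eq]
    rcases x with j | j <;> rcases y with k | k <;>
      simp [FCaseII, FblkC, Matrix.fromBlocks, Matrix.one_apply, Fin.val_eq_val, eq_comm] <;>
      aesop
  · rw [Matrix.blockDiagonal'_apply_ne _ _ _ h]
    rcases x with j | j <;> rcases y with k | k <;> simp [FCaseII, h]

theorem FblkC_one (m : ℕ) : FblkC 1 m = symplJSum m := by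
  ext x y
  rcases x with j | j <;> rcases y with k | k <;>
    simp [FblkC, symplJSum, Matrix.fromBlocks, Matrix.one_apply, Fin.val_eq_val, apply_ite]

section Blocks
variable {A : Type} [Ring A] [Algebra ℂ A] [StarRing A] [StarModule ℂ A]


/-- `[[a, 0], [0, conj a]]`. -/
def biM {n : ℕ} (a : Matrix (Fin n) (Fin n) A) :
    Matrix (Fin n ⊕ Fin n) (Fin n ⊕ Fin n) A :=
  Matrix.fromBlocks a 0 0 (a.map star)

theorem FblkC_map (t : ℝ) (n : ℕ) :
    (FblkC t n).map (algebraMap ℂ A) =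
      Matrix.fromBlocks 0 (((t : ℂ)) • 1) ((-((t : ℂ))⁻¹) • 1) 0 := by
  ext x y
  rcases x with j | j <;> rcases y with k | k <;>
    by_cases h : j = k <;>
      simp [FblkC, Matrix.map_apply, Matrix.fromBlocks, Matrix.one_apply, h,
        Algebra.algebraMap_eq_smul_one, smul_smul] <;>
  push_cast [Complex.ofReal_inv] <;> simp

theorem map_star_map_star {n : ℕ} (a : Matrix (Fin n) (Fin n) A) :
    (a.map star).map star = a := by
  ext i j; simp [Matrix.map_apply]

/-- The three per-block conditions satisfied by `biM a` when `a` is bi-unitary. -/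
theorem biM_cond {n : ℕ} (t : ℝ) {a : Matrix (Fin n) (Fin n) A} (h : BiUnitary a) :
    biM a * (biM a).conjTranspose = 1 ∧ (biM a).conjTranspose * biM a = 1 ∧
      biM a * (FblkC t n).map (algebraMap ℂ A) =
        (FblkC t n).map (algebraMap ℂ A) * (biM a).map star := by
  obtain ⟨h1, h2, h3, h4⟩ := h
  have hbc : (biM a).conjTranspose =
      Matrix.fromBlocks a.conjTranspose 0 0 (a.map star).conjTranspose := by
    simp [biM, Matrix.fromBlocks_conjTranspose]
  have hbs : (biM a).map star = Matrix.fromBlocks (a.map star) 0 0 a := by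
    simp [biM, Matrix.fromBlocks_map, map_star_map_star]
    ext i j; simp [Matrix.map_apply]
  refine ⟨?_, ?_, ?_⟩
  · rw [hbc, biM, Matrix.fromBlocks_multiply]
    simp [h1, h3, ← Matrix.fromBlocks_one]
  · rw [hbc, biM, Matrix.fromBlocks_multiply]
    simp [h2, h4, ← Matrix.fromBlocks_one]
  · rw [hbs, FblkC_map, biM, Matrix.fromBlocks_multiply, Matrix.fromBlocks_multiply]
    congr 1 <;> simp [Matrix.mul_smul, Matrix.smul_mul]

/-- Bi-unitarity of `a` from unitarity of `biM a`. -/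
theorem biUnitary_of_biM {n : ℕ} {a : Matrix (Fin n) (Fin n) A}
    (h1 : biM a * (biM a).conjTranspose = 1) (h2 : (biM a).conjTranspose * biM a = 1) :
    BiUnitary a := by
  have hbc : (biM a).conjTranspose =
      Matrix.fromBlocks a.conjTranspose 0 0 (a.map star).conjTranspose := by
    simp [biM, Matrix.fromBlocks_conjTranspose]
  rw [hbc, biM, Matrix.fromBlocks_multiply, ← Matrix.fromBlocks_one] at h1 h2
  simp only [Matrix.mul_zero, Matrix.zero_mul, add_zero, zero_add] at h1 h2
  have e1 := congrArg Matrix.toBlocks₁₁ h1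
  have e2 := congrArg Matrix.toBlocks₂₂ h1
  have e3 := congrArg Matrix.toBlocks₁₁ h2
  have e4 := congrArg Matrix.toBlocks₂₂ h2
  simp only [Matrix.toBlocks_fromBlocks₁₁, Matrix.toBlocks_fromBlocks₂₂] at e1 e2 e3 e4
  exact ⟨e1, e3, e2, e4⟩
end Blocks

section BD
variable {A : Type} [Ring A] [Algebra ℂ A] [StarRing A] [StarModule ℂ A]
variable {r : ℕ} {q : Fin r → ℝ} {M : Fin r → ℕ}

theorem blockDiagonal'_map_star (g : ∀ ν : Fin r, Matrix (Fin (M ν) ⊕ Fin (M ν)) (Fin (M ν) ⊕ Fin (M ν)) A) :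
    (Matrix.blockDiagonal' g).map star = Matrix.blockDiagonal' (fun ν => (g ν).map star) :=
  Matrix.blockDiagonal'_map g star (star_zero A)

theorem FCaseII_map_bd :
    (FCaseII r q M).map (algebraMap ℂ A) =
      Matrix.blockDiagonal' (fun ν => (FblkC (q ν) (M ν)).map (algebraMap ℂ A)) := by
  rw [FCaseII_eq_blockDiagonal']
  exact Matrix.blockDiagonal'_map _ _ (map_zero _)

theorem orthRel_blockDiagonal'_iff
    (g : ∀ ν : Fin r, Matrix (Fin (M ν) ⊕ Fin (M ν)) (Fin (M ν) ⊕ Fin (M ν)) A) :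
    OrthRel (FCaseII r q M) (Matrix.blockDiagonal' g) ↔
      ∀ ν, g ν * (g ν).conjTranspose = 1 ∧ (g ν).conjTranspose * g ν = 1 ∧
        g ν * (FblkC (q ν) (M ν)).map (algebraMap ℂ A) =
          (FblkC (q ν) (M ν)).map (algebraMap ℂ A) * (g ν).map star := by
  constructor
  · rintro ⟨h1, h2, h3⟩ ν
    rw [Matrix.blockDiagonal'_conjTranspose, ← Matrix.blockDiagonal'_mul,
      ← Matrix.blockDiagonal'_one] at h1 h2
    rw [FCaseII_map_bd, ← Matrix.blockDiagonal'_mul, blockDiagonal'_map_star,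
      ← Matrix.blockDiagonal'_mul] at h3
    exact ⟨congrFun (Matrix.blockDiagonal'_injective h1) ν,
      congrFun (Matrix.blockDiagonal'_injective h2) ν,
      congrFun (Matrix.blockDiagonal'_injective h3) ν⟩
  · intro h
    refine ⟨?_, ?_, ?_⟩
    · rw [Matrix.blockDiagonal'_conjTranspose, ← Matrix.blockDiagonal'_mul,
        ← Matrix.blockDiagonal'_one]
      exact congrArg _ (funext fun ν => (h ν).1)
    · rw [Matrix.blockDiagonal'_conjTranspose, ← Matrix.blockDiagonal'_mul,
        ← Matrix.blockDiagonal'_one]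
      exact congrArg _ (funext fun ν => (h ν).2.1)
    · rw [FCaseII_map_bd, ← Matrix.blockDiagonal'_mul, blockDiagonal'_map_star,
        ← Matrix.blockDiagonal'_mul]
      exact congrArg _ (funext fun ν => (h ν).2.2)
end BD

section MkBlk
variable {A : Type} [Ring A] [Algebra ℂ A] [StarRing A] [StarModule ℂ A]
variable {r : ℕ} {q : Fin r → ℝ} {M : Fin r → ℕ}

/-- The block family: `biM (a ν)` for `ν < r-1`, `v` for `ν = r-1`. -/
def mkBlk (hr : 1 ≤ r) (M : Fin r → ℕ)
    (a : ∀ ν' : Fin (r - 1), Matrix (Fin (M (Fin.castLE (Nat.sub_le r 1) ν')))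
      (Fin (M (Fin.castLE (Nat.sub_le r 1) ν'))) A)
    (v : Matrix (Fin (M ⟨r - 1, Nat.sub_lt_self Nat.one_pos hr⟩) ⊕ Fin (M ⟨r - 1, Nat.sub_lt_self Nat.one_pos hr⟩))
      (Fin (M ⟨r - 1, Nat.sub_lt_self Nat.one_pos hr⟩) ⊕ Fin (M ⟨r - 1, Nat.sub_lt_self Nat.one_pos hr⟩)) A) :
    ∀ ν : Fin r, Matrix (Fin (M ν) ⊕ Fin (M ν)) (Fin (M ν) ⊕ Fin (M ν)) A := fun ν =>
  if h : (ν : ℕ) < r - 1 then biM (a ⟨ν.1, h⟩)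
  else (Fin.ext (a := (⟨r - 1, Nat.sub_lt_self Nat.one_pos hr⟩ : Fin r)) (b := ν) (by
      show r - 1 = ν.1
      have h2 := ν.2
      omega) : (⟨r - 1, Nat.sub_lt_self Nat.one_pos hr⟩ : Fin r) = ν) ▸ v

theorem mkBlk_lt (hr : 1 ≤ r) (M : Fin r → ℕ) (a) (v) {ν : Fin r} (h : (ν : ℕ) < r - 1) :
    mkBlk (A := A) hr M a v ν = biM (a ⟨ν.1, h⟩) := dif_pos h

theorem mkBlk_last (hr : 1 ≤ r) (M : Fin r → ℕ) (a) (v) (h : r - 1 < r) :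
    mkBlk (A := A) hr M a v ⟨r - 1, h⟩ = v := by
  rw [mkBlk, dif_neg (show ¬((⟨r - 1, h⟩ : Fin r) : ℕ) < r - 1 from lt_irrefl _)]

theorem mkBlk_orthRel (hr : 1 ≤ r) (hqlast : q ⟨r - 1, Nat.sub_lt_self Nat.one_pos hr⟩ = 1)
    (a : ∀ ν' : Fin (r - 1), Matrix (Fin (M (Fin.castLE (Nat.sub_le r 1) ν')))
      (Fin (M (Fin.castLE (Nat.sub_le r 1) ν'))) A)
    (v : Matrix (Fin (M ⟨r - 1, Nat.sub_lt_self Nat.one_pos hr⟩) ⊕ Fin (M ⟨r - 1, Nat.sub_lt_self Nat.one_pos hr⟩))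
      (Fin (M ⟨r - 1, Nat.sub_lt_self Nat.one_pos hr⟩) ⊕ Fin (M ⟨r - 1, Nat.sub_lt_self Nat.one_pos hr⟩)) A)
    (rel_a : ∀ ν', BiUnitary (a ν'))
    (rel_v : OrthRel (symplJSum (M ⟨r - 1, Nat.sub_lt_self Nat.one_pos hr⟩)) v) :
    OrthRel (FCaseII r q M) (Matrix.blockDiagonal' (mkBlk hr M a v)) := by
  rw [orthRel_blockDiagonal'_iff]
  intro ν
  by_cases h : (ν : ℕ) < r - 1
  · rw [mkBlk_lt hr M a v h]
    exact biM_cond (q ν) (rel_a ⟨ν.1, h⟩)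
  · obtain ⟨nv, hnv⟩ := ν
    have : nv = r - 1 := by simp at h; omega
    subst this
    rw [mkBlk_last hr M a v hnv]
    have hq1 : q ⟨r - 1, hnv⟩ = 1 := hqlast
    rw [hq1, FblkC_one]
    exact rel_v

end MkBlk

section Entries
variable {A : Type} [Ring A] [Algebra ℂ A] [StarRing A] [StarModule ℂ A]
variable {r : ℕ} {q : Fin r → ℝ} {M : Fin r → ℕ}
variable (u : Matrix (Σ ν : Fin r, (Fin (M ν) ⊕ Fin (M ν))) (Σ ν : Fin r, (Fin (M ν) ⊕ Fin (M ν))) A)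

theorem mulF_col_inl (a : Σ ν : Fin r, (Fin (M ν) ⊕ Fin (M ν))) (μ : Fin r) (k : Fin (M μ)) :
    (u * (FCaseII r q M).map (algebraMap ℂ A)) a ⟨μ, .inl k⟩ =
      u a ⟨μ, .inr k⟩ * algebraMap ℂ A ((-(q μ)⁻¹ : ℝ) : ℂ) := by
  rw [Matrix.mul_apply]
  rw [Fintype.sum_eq_single (⟨μ, Sum.inr k⟩ : Σ ν : Fin r, (Fin (M ν) ⊕ Fin (M ν)))]
  · simp [FCaseII, Matrix.map_apply]
  · rintro ⟨ν, x⟩ hb'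
    rcases x with j' | j'
    · simp [FCaseII, Matrix.map_apply]
    · have hne : ¬(ν = μ ∧ (j' : ℕ) = (k : ℕ)) := by
        rintro ⟨rfl, hjk⟩
        exact hb' (by cases Fin.ext hjk; rfl)
      simp [FCaseII, Matrix.map_apply, hne]

theorem mulF_col_inr (a : Σ ν : Fin r, (Fin (M ν) ⊕ Fin (M ν))) (μ : Fin r) (k : Fin (M μ)) :
    (u * (FCaseII r q M).map (algebraMap ℂ A)) a ⟨μ, .inr k⟩ =
      u a ⟨μ, .inl k⟩ * algebraMap ℂ A ((q μ : ℝ) : ℂ) := by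
  rw [Matrix.mul_apply]
  rw [Fintype.sum_eq_single (⟨μ, Sum.inl k⟩ : Σ ν : Fin r, (Fin (M ν) ⊕ Fin (M ν)))]
  · simp [FCaseII, Matrix.map_apply]
  · rintro ⟨ν, x⟩ hb'
    rcases x with j' | j'
    · have hne : ¬(ν = μ ∧ (j' : ℕ) = (k : ℕ)) := by
        rintro ⟨rfl, hjk⟩
        exact hb' (by cases Fin.ext hjk; rfl)
      simp [FCaseII, Matrix.map_apply, hne]
    · simp [FCaseII, Matrix.map_apply]

theorem Fmul_row_inl (w : Matrix (Σ ν : Fin r, (Fin (M ν) ⊕ Fin (M ν))) (Σ ν : Fin r, (Fin (M ν) ⊕ Fin (M ν))) A)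
    (ν : Fin r) (j : Fin (M ν)) (b : Σ ν : Fin r, (Fin (M ν) ⊕ Fin (M ν))) :
    ((FCaseII r q M).map (algebraMap ℂ A) * w) ⟨ν, .inl j⟩ b =
      algebraMap ℂ A ((q ν : ℝ) : ℂ) * w ⟨ν, .inr j⟩ b := by
  rw [Matrix.mul_apply]
  rw [Fintype.sum_eq_single (⟨ν, Sum.inr j⟩ : Σ ν : Fin r, (Fin (M ν) ⊕ Fin (M ν)))]
  · simp [FCaseII, Matrix.map_apply]
  · rintro ⟨μ, x⟩ hb'
    rcases x with k' | k'
    · simp [FCaseII, Matrix.map_apply]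
    · have hne : ¬(ν = μ ∧ (j : ℕ) = (k' : ℕ)) := by
        rintro ⟨rfl, hjk⟩
        exact hb' (by cases Fin.ext hjk; rfl)
      simp [FCaseII, Matrix.map_apply, hne]

theorem Fmul_row_inr (w : Matrix (Σ ν : Fin r, (Fin (M ν) ⊕ Fin (M ν))) (Σ ν : Fin r, (Fin (M ν) ⊕ Fin (M ν))) A)
    (ν : Fin r) (j : Fin (M ν)) (b : Σ ν : Fin r, (Fin (M ν) ⊕ Fin (M ν))) :
    ((FCaseII r q M).map (algebraMap ℂ A) * w) ⟨ν, .inr j⟩ b =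
      algebraMap ℂ A ((-(q ν)⁻¹ : ℝ) : ℂ) * w ⟨ν, .inl j⟩ b := by
  rw [Matrix.mul_apply]
  rw [Fintype.sum_eq_single (⟨ν, Sum.inl j⟩ : Σ ν : Fin r, (Fin (M ν) ⊕ Fin (M ν)))]
  · simp [FCaseII, Matrix.map_apply]
  · rintro ⟨μ, x⟩ hb'
    rcases x with k' | k'
    · have hne : ¬(ν = μ ∧ (j : ℕ) = (k' : ℕ)) := by
        rintro ⟨rfl, hjk⟩
        exact hb' (by cases Fin.ext hjk; rfl)
      simp [FCaseII, Matrix.map_apply, hne]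
    · simp [FCaseII, Matrix.map_apply]
end Entries

section RRel
variable {A : Type} [Ring A] [Algebra ℂ A] [StarRing A] [StarModule ℂ A]
variable {r : ℕ} {q : Fin r → ℝ} {M : Fin r → ℕ}
variable {u : Matrix (Σ ν : Fin r, (Fin (M ν) ⊕ Fin (M ν))) (Σ ν : Fin r, (Fin (M ν) ⊕ Fin (M ν))) A}

theorem algInv_cancel (hq : ∀ ν, 0 < q ν) (μ : Fin r) :
    algebraMap ℂ A ((-(q μ)⁻¹ : ℝ) : ℂ) * algebraMap ℂ A ((-(q μ) : ℝ) : ℂ) = 1 := by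
  rw [← map_mul]
  have : (((-(q μ)⁻¹ : ℝ) : ℂ)) * (((-(q μ) : ℝ) : ℂ)) = 1 := by
    rw [← Complex.ofReal_mul]
    have : (-(q μ)⁻¹ : ℝ) * (-(q μ)) = 1 := by
      rw [neg_mul_neg, inv_mul_cancel₀ (ne_of_gt (hq μ))]
    rw [this, Complex.ofReal_one]
  rw [this, map_one]

theorem entry_B_eq (hq : ∀ ν, 0 < q ν)
    (h3 : u * (FCaseII r q M).map (algebraMap ℂ A) =
      (FCaseII r q M).map (algebraMap ℂ A) * u.map star)
    (ν μ : Fin r) (j : Fin (M ν)) (k : Fin (M μ)) :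
    u ⟨ν, .inl j⟩ ⟨μ, .inr k⟩ =
      algebraMap ℂ A (((-(q μ) * q ν : ℝ) : ℂ)) * star (u ⟨ν, .inr j⟩ ⟨μ, .inl k⟩) := by
  have e := congrFun (congrFun h3 ⟨ν, .inl j⟩) ⟨μ, .inl k⟩
  rw [mulF_col_inl, Fmul_row_inl] at e
  have estar : (u.map star) ⟨ν, .inr j⟩ ⟨μ, .inl k⟩ = star (u ⟨ν, .inr j⟩ ⟨μ, .inl k⟩) := rfl
  rw [estar] at e
  calc u ⟨ν, .inl j⟩ ⟨μ, .inr k⟩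
      = u ⟨ν, .inl j⟩ ⟨μ, .inr k⟩ *
          (algebraMap ℂ A ((-(q μ)⁻¹ : ℝ) : ℂ) * algebraMap ℂ A ((-(q μ) : ℝ) : ℂ)) := by
        rw [algInv_cancel hq, mul_one]
    _ = (u ⟨ν, .inl j⟩ ⟨μ, .inr k⟩ * algebraMap ℂ A ((-(q μ)⁻¹ : ℝ) : ℂ)) *
          algebraMap ℂ A ((-(q μ) : ℝ) : ℂ) := by rw [mul_assoc]
    _ = (algebraMap ℂ A ((q ν : ℝ) : ℂ) * star (u ⟨ν, .inr j⟩ ⟨μ, .inl k⟩)) *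
          algebraMap ℂ A ((-(q μ) : ℝ) : ℂ) := by rw [e]
    _ = algebraMap ℂ A (((-(q μ) * q ν : ℝ) : ℂ)) * star (u ⟨ν, .inr j⟩ ⟨μ, .inl k⟩) := by
        rw [mul_assoc, ← Algebra.commutes, ← mul_assoc, ← map_mul]
        congr 2
        push_cast
        ring

theorem entry_D_eq (hq : ∀ ν, 0 < q ν)
    (h3 : u * (FCaseII r q M).map (algebraMap ℂ A) =
      (FCaseII r q M).map (algebraMap ℂ A) * u.map star)
    (ν μ : Fin r) (j : Fin (M ν)) (k : Fin (M μ)) :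
    u ⟨ν, .inr j⟩ ⟨μ, .inr k⟩ =
      algebraMap ℂ A (((q μ * (q ν)⁻¹ : ℝ) : ℂ)) * star (u ⟨ν, .inl j⟩ ⟨μ, .inl k⟩) := by
  have e := congrFun (congrFun h3 ⟨ν, .inr j⟩) ⟨μ, .inl k⟩
  rw [mulF_col_inl, Fmul_row_inr] at e
  have estar : (u.map star) ⟨ν, .inl j⟩ ⟨μ, .inl k⟩ = star (u ⟨ν, .inl j⟩ ⟨μ, .inl k⟩) := rfl
  rw [estar] at e
  calc u ⟨ν, .inr j⟩ ⟨μ, .inr k⟩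
      = u ⟨ν, .inr j⟩ ⟨μ, .inr k⟩ *
          (algebraMap ℂ A ((-(q μ)⁻¹ : ℝ) : ℂ) * algebraMap ℂ A ((-(q μ) : ℝ) : ℂ)) := by
        rw [algInv_cancel hq, mul_one]
    _ = (u ⟨ν, .inr j⟩ ⟨μ, .inr k⟩ * algebraMap ℂ A ((-(q μ)⁻¹ : ℝ) : ℂ)) *
          algebraMap ℂ A ((-(q μ) : ℝ) : ℂ) := by rw [mul_assoc]
    _ = (algebraMap ℂ A ((-(q ν)⁻¹ : ℝ) : ℂ) * star (u ⟨ν, .inl j⟩ ⟨μ, .inl k⟩)) *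
          algebraMap ℂ A ((-(q μ) : ℝ) : ℂ) := by rw [e]
    _ = algebraMap ℂ A (((q μ * (q ν)⁻¹ : ℝ) : ℂ)) * star (u ⟨ν, .inl j⟩ ⟨μ, .inl k⟩) := by
        rw [mul_assoc, ← Algebra.commutes, ← mul_assoc, ← map_mul]
        congr 2
        push_cast
        ring

theorem entry_D_diag (hq : ∀ ν, 0 < q ν)
    (h3 : u * (FCaseII r q M).map (algebraMap ℂ A) =
      (FCaseII r q M).map (algebraMap ℂ A) * u.map star)
    (ν : Fin r) (j k : Fin (M ν)) :
    u ⟨ν, .inr j⟩ ⟨ν, .inr k⟩ = star (u ⟨ν, .inl j⟩ ⟨ν, .inl k⟩) := by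
  rw [entry_D_eq hq h3 ν ν j k]
  have : ((q ν * (q ν)⁻¹ : ℝ) : ℂ) = 1 := by
    rw [mul_inv_cancel₀ (ne_of_gt (hq ν)), Complex.ofReal_one]
  rw [this, map_one, one_mul]
end RRel

section Sympl
variable {A : Type} [Ring A] [Algebra ℂ A] [StarRing A] [StarModule ℂ A] {m : ℕ}

theorem symplJ_map :
    (symplJSum m).map (algebraMap ℂ A) = Matrix.fromBlocks 0 1 (-1) 0 := by
  ext x y
  rcases x with j | j <;> rcases y with k | k <;>
    by_cases h : j = k <;>
      simp [symplJSum, Matrix.map_apply, Matrix.fromBlocks, Matrix.one_apply, h,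
        Fin.val_eq_val, apply_ite]

variable {v : Matrix (Fin m ⊕ Fin m) (Fin m ⊕ Fin m) A}

theorem sympl_blocks
    (h3 : v * (symplJSum m).map (algebraMap ℂ A) =
      (symplJSum m).map (algebraMap ℂ A) * v.map star) :
    v.toBlocks₁₂ = -(v.toBlocks₂₁.map star) ∧ v.toBlocks₂₂ = v.toBlocks₁₁.map star := by
  rw [symplJ_map, ← Matrix.fromBlocks_toBlocks v] at h3
  have hms : (Matrix.fromBlocks v.toBlocks₁₁ v.toBlocks₁₂ v.toBlocks₂₁ v.toBlocks₂₂).map star =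
      Matrix.fromBlocks (v.toBlocks₁₁.map star) (v.toBlocks₁₂.map star)
        (v.toBlocks₂₁.map star) (v.toBlocks₂₂.map star) := Matrix.fromBlocks_map _ _ _ _ _
  rw [hms, Matrix.fromBlocks_multiply, Matrix.fromBlocks_multiply] at h3
  have e11 := congrArg Matrix.toBlocks₁₁ h3
  have e12 := congrArg Matrix.toBlocks₁₂ h3
  simp only [Matrix.toBlocks_fromBlocks₁₁, Matrix.toBlocks_fromBlocks₁₂] at e11 e12
  simp only [Matrix.mul_zero, Matrix.zero_mul, Matrix.mul_one, Matrix.one_mul,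
    Matrix.mul_neg, Matrix.neg_mul, add_zero, zero_add, Matrix.mul_one] at e11 e12
  exact ⟨neg_eq_iff_eq_neg.mp e11, by rw [e12, map_star_map_star]⟩
end Sympl

end Helpers

set_option maxHeartbeats 2000000 in
/-- in the Case II setting, the quotient of `Pol(O_F⁺)` by the two-sided
*-ideal `I` generated by all entries of the blocks `C_{μν}` (`(μ,ν) ≠ (r,r)`) and `A_{μν}`
(`μ ≠ ν`) is *-isomorphic to `(⋆_{ν=1}^{r−1} Pol(U⁺_{M_ν})) ⋆ Pol(O_J⁺)`, the class of an
entry of `A_{νν}` (`ν ≤ r−1`) corresponding to `a⁽ᵛ⁾_{jk}`, the class of an entry of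
`A_{rr}` to the corresponding entry of the upper-left block of `V`, and the class of an
entry of `C_{rr}` to the corresponding entry of the lower-left block of `V`.  This is
expressed by a surjective unital *-homomorphism whose kernel is exactly `I`. -/
theorem caseII_quotient_iso (r : ℕ) (hr : 1 ≤ r) (q : Fin r → ℝ) (hq0 : ∀ ν, 0 < q ν)
    (hmono : StrictMono q) (hqlast : q ⟨r - 1, by omega⟩ = 1) (M : Fin r → ℕ)
    (hM : ∀ ν : Fin r, (ν : ℕ) < r - 1 → 1 ≤ M ν) (P : PolO (FCaseII r q M))
    (B : FreeProdUOSympl (r - 1) (fun ν => M (Fin.castLE (by omega) ν))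
          (M ⟨r - 1, by omega⟩)) :
    ∃ φ : P.carrier →⋆ₐ[ℂ] B.carrier,
      Function.Surjective φ ∧
      (∀ (ν : Fin (r - 1)) (j k : Fin (M (Fin.castLE (by omega) ν))),
        φ (P.u ⟨Fin.castLE (by omega) ν, .inl j⟩ ⟨Fin.castLE (by omega) ν, .inl k⟩) =
          B.a ν j k) ∧
      (∀ j k : Fin (M ⟨r - 1, by omega⟩),
        φ (P.u ⟨⟨r - 1, by omega⟩, .inl j⟩ ⟨⟨r - 1, by omega⟩, .inl k⟩) =
          B.v (.inl j) (.inl k)) ∧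
      (∀ j k : Fin (M ⟨r - 1, by omega⟩),
        φ (P.u ⟨⟨r - 1, by omega⟩, .inr j⟩ ⟨⟨r - 1, by omega⟩, .inl k⟩) =
          B.v (.inr j) (.inl k)) ∧
      {x : P.carrier | φ x = 0} =
        starIdealSpan
          {x : P.carrier |
            (∃ μ ν : Fin r,
              (μ, ν) ≠ ((⟨r - 1, by omega⟩ : Fin r), (⟨r - 1, by omega⟩ : Fin r)) ∧
              ∃ (j : Fin (M μ)) (k : Fin (M ν)), x = P.u ⟨μ, .inr j⟩ ⟨ν, .inl k⟩) ∨
            ∃ μ ν : Fin r, μ ≠ ν ∧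
              ∃ (j : Fin (M μ)) (k : Fin (M ν)), x = P.u ⟨μ, .inl j⟩ ⟨ν, .inl k⟩} := by
  classical
  have hrlt : r - 1 < r := by omega
  -- the image matrix over B.carrier
  have hW : OrthRel (FCaseII r q M) (Matrix.blockDiagonal' (mkBlk hr M B.a B.v)) :=
    mkBlk_orthRel hr hqlast B.a B.v B.rel_a B.rel_v
  obtain ⟨φ, hφu, -⟩ := P.universal B.carrier _ hW
  -- entry values of the image matrix
  have hW_aa : ∀ (ν' : Fin (r - 1)) (j k : Fin (M (Fin.castLE (Nat.sub_le r 1) ν'))),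
      Matrix.blockDiagonal' (mkBlk (A := B.carrier) hr M B.a B.v)
        ⟨Fin.castLE (Nat.sub_le r 1) ν', .inl j⟩ ⟨Fin.castLE (Nat.sub_le r 1) ν', .inl k⟩ =
        B.a ν' j k := by
    intro ν' j k
    rw [Matrix.blockDiagonal'_apply_eq,
      mkBlk_lt hr M B.a B.v (show ((Fin.castLE (Nat.sub_le r 1) ν' : Fin r) : ℕ) < r - 1 from ν'.2)]
    rfl
  have hW_v : ∀ p t,
      Matrix.blockDiagonal' (mkBlk (A := B.carrier) hr M B.a B.v)
        ⟨⟨r - 1, hrlt⟩, p⟩ ⟨⟨r - 1, hrlt⟩, t⟩ = B.v p t := by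
    intro p t
    rw [Matrix.blockDiagonal'_apply_eq, mkBlk_last hr M B.a B.v hrlt]
  -- surjectivity
  have hsurj : Function.Surjective φ := by
    have hmem_a : ∀ (ν' : Fin (r - 1)) j k, B.a ν' j k ∈ φ.range := by
      intro ν' j k
      exact ⟨P.u ⟨Fin.castLE (Nat.sub_le r 1) ν', .inl j⟩ ⟨Fin.castLE (Nat.sub_le r 1) ν', .inl k⟩,
        (hφu _ _).trans (hW_aa ν' j k)⟩
    have hmem_v : ∀ p t, B.v p t ∈ φ.range := by
      intro p t
      exact ⟨P.u ⟨⟨r - 1, hrlt⟩, p⟩ ⟨⟨r - 1, hrlt⟩, t⟩, (hφu _ _).trans (hW_v p t)⟩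
    let b' : ∀ ν' : Fin (r - 1), Matrix (Fin (M (Fin.castLE (Nat.sub_le r 1) ν')))
        (Fin (M (Fin.castLE (Nat.sub_le r 1) ν'))) φ.range :=
      fun ν' j k => ⟨B.a ν' j k, hmem_a ν' j k⟩
    let w' : Matrix (Fin (M ⟨r - 1, hrlt⟩) ⊕ Fin (M ⟨r - 1, hrlt⟩))
        (Fin (M ⟨r - 1, hrlt⟩) ⊕ Fin (M ⟨r - 1, hrlt⟩)) φ.range :=
      fun p t => ⟨B.v p t, hmem_v p t⟩
    have hinj : Function.Injective φ.range.subtype := Subtype.coe_injective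
    have hb'rel : ∀ ν', BiUnitary (b' ν') := by
      intro ν'
      refine BiUnitary.of_mapHom φ.range.subtype hinj ?_
      have : (b' ν').map φ.range.subtype = B.a ν' := by ext i j; rfl
      rw [this]; exact B.rel_a ν'
    have hw'rel : OrthRel (symplJSum (M ⟨r - 1, hrlt⟩)) w' := by
      refine OrthRel.of_mapHom φ.range.subtype hinj ?_
      have : w'.map φ.range.subtype = B.v := by ext i j; rfl
      rw [this]; exact B.rel_v
    obtain ⟨ψS, hψS, -⟩ := B.universal φ.range b' w' hb'rel hw'rel
    obtain ⟨θ, -, hθu⟩ := B.universal B.carrier B.a B.v B.rel_a B.rel_v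
    have h1 : φ.range.subtype.comp ψS = θ := by
      refine hθu _ ⟨fun ν j k => ?_, fun p t => ?_⟩
      · show (ψS (B.a ν j k) : B.carrier) = B.a ν j k
        rw [hψS.1 ν j k]
      · show (ψS (B.v p t) : B.carrier) = B.v p t
        rw [hψS.2 p t]
    have h2 : StarAlgHom.id ℂ B.carrier = θ :=
      hθu _ ⟨fun ν j k => rfl, fun p t => rfl⟩
    have hid : φ.range.subtype.comp ψS = StarAlgHom.id ℂ B.carrier := h1.trans h2.symm
    intro y
    have hy : (ψS y : B.carrier) = y := DFunLike.congr_fun hid y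
    obtain ⟨x, hx⟩ := (ψS y).2
    exact ⟨x, hx.trans hy⟩
  -- the generating set and its span
  set Sgen : Set P.carrier :=
    {x : P.carrier |
      (∃ μ ν : Fin r,
        (μ, ν) ≠ ((⟨r - 1, hrlt⟩ : Fin r), (⟨r - 1, hrlt⟩ : Fin r)) ∧
        ∃ (j : Fin (M μ)) (k : Fin (M ν)), x = P.u ⟨μ, .inr j⟩ ⟨ν, .inl k⟩) ∨
      ∃ μ ν : Fin r, μ ≠ ν ∧
        ∃ (j : Fin (M μ)) (k : Fin (M ν)), x = P.u ⟨μ, .inl j⟩ ⟨ν, .inl k⟩} with hSgen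
  have hI : IsStarIdeal (starIdealSpan Sgen) := isStarIdeal_starIdealSpan Sgen
  -- span ⊆ kernel
  have hker1 : starIdealSpan Sgen ⊆ {x : P.carrier | φ x = 0} := by
    refine starIdealSpan_le ⟨?_, ?_, ?_, ?_⟩ ?_
    · show φ 0 = 0; exact map_zero φ
    · intro a b ha hb
      show φ (a + b) = 0
      rw [map_add, ha, hb, add_zero]
    · intro x a ha
      constructor
      · show φ (x * a) = 0
        rw [map_mul, ha, mul_zero]
      · show φ (a * x) = 0
        rw [map_mul, ha, zero_mul]
    · intro a ha
      show φ (star a) = 0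
      rw [map_star, ha, star_zero]
    · rintro x (⟨μ, ν, hne, j, k, rfl⟩ | ⟨μ, ν, hne, j, k, rfl⟩)
      · show φ (P.u ⟨μ, .inr j⟩ ⟨ν, .inl k⟩) = 0
        rw [hφu]
        by_cases hμν : μ = ν
        · subst hμν
          have hμρ : μ ≠ (⟨r - 1, hrlt⟩ : Fin r) := fun h => hne (by rw [h])
          have hlt : (μ : ℕ) < r - 1 := by
            have h2 := μ.2
            have h3 : (μ : ℕ) ≠ r - 1 := fun h => hμρ (Fin.ext h)
            omega
          rw [Matrix.blockDiagonal'_apply_eq, mkBlk_lt hr M B.a B.v hlt]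
          simp [biM]
        · rw [Matrix.blockDiagonal'_apply_ne _ _ _ hμν]
      · show φ (P.u ⟨μ, .inl j⟩ ⟨ν, .inl k⟩) = 0
        rw [hφu, Matrix.blockDiagonal'_apply_ne _ _ _ hne]
  -- kernel ⊆ span, via the quotient
  have hker2 : {x : P.carrier | φ x = 0} ⊆ starIdealSpan Sgen := by
    have hstar' : ∀ a b, (starIdealRingCon hI) a b → (starIdealRingCon hI) (star a) (star b) := by
      intro a b h
      rw [starIdealRingCon_iff] at h ⊢
      rw [← star_sub]
      exact hI.2.2.2 _ h
    obtain ⟨Q, π, hkerπ⟩ := mkQuotPkg hI hstar'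
    have hπ0 : ∀ x ∈ starIdealSpan Sgen, π x = 0 := fun x hx => (hkerπ x).mpr hx
    have hmemA : ∀ (μ ν : Fin r) (j : Fin (M μ)) (k : Fin (M ν)), μ ≠ ν →
        P.u ⟨μ, .inl j⟩ ⟨ν, .inl k⟩ ∈ starIdealSpan Sgen := fun μ ν j k h =>
      subset_starIdealSpan Sgen (Or.inr ⟨μ, ν, h, j, k, rfl⟩)
    have hmemC : ∀ (μ ν : Fin r) (j : Fin (M μ)) (k : Fin (M ν)),
        (μ, ν) ≠ ((⟨r - 1, hrlt⟩ : Fin r), (⟨r - 1, hrlt⟩ : Fin r)) →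
        P.u ⟨μ, .inr j⟩ ⟨ν, .inl k⟩ ∈ starIdealSpan Sgen := fun μ ν j k h =>
      subset_starIdealSpan Sgen (Or.inl ⟨μ, ν, h, j, k, rfl⟩)
    have hmemB : ∀ (μ ν : Fin r) (j : Fin (M μ)) (k : Fin (M ν)),
        (μ, ν) ≠ ((⟨r - 1, hrlt⟩ : Fin r), (⟨r - 1, hrlt⟩ : Fin r)) →
        P.u ⟨μ, .inl j⟩ ⟨ν, .inr k⟩ ∈ starIdealSpan Sgen := by
      intro μ ν j k h
      rw [entry_B_eq hq0 P.rel.2.2 μ ν j k]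
      exact (hI.2.2.1 _ _ (hI.2.2.2 _ (hmemC μ ν j k h))).1
    have hmemD : ∀ (μ ν : Fin r) (j : Fin (M μ)) (k : Fin (M ν)), μ ≠ ν →
        P.u ⟨μ, .inr j⟩ ⟨ν, .inr k⟩ ∈ starIdealSpan Sgen := by
      intro μ ν j k h
      rw [entry_D_eq hq0 P.rel.2.2 μ ν j k]
      exact (hI.2.2.1 _ _ (hI.2.2.2 _ (hmemA μ ν j k h))).1
    let AQ : ∀ ν' : Fin (r - 1), Matrix (Fin (M (Fin.castLE (Nat.sub_le r 1) ν')))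
        (Fin (M (Fin.castLE (Nat.sub_le r 1) ν'))) Q :=
      fun ν' j k => π (P.u ⟨Fin.castLE (Nat.sub_le r 1) ν', .inl j⟩
        ⟨Fin.castLE (Nat.sub_le r 1) ν', .inl k⟩)
    let VQ : Matrix (Fin (M ⟨r - 1, hrlt⟩) ⊕ Fin (M ⟨r - 1, hrlt⟩))
        (Fin (M ⟨r - 1, hrlt⟩) ⊕ Fin (M ⟨r - 1, hrlt⟩)) Q :=
      fun p t => π (P.u ⟨⟨r - 1, hrlt⟩, p⟩ ⟨⟨r - 1, hrlt⟩, t⟩)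
    have hpairne : ∀ {μ ν : Fin r}, μ ≠ ν →
        (μ, ν) ≠ ((⟨r - 1, hrlt⟩ : Fin r), (⟨r - 1, hrlt⟩ : Fin r)) := by
      intro μ ν h hc
      exact h ((congrArg Prod.fst hc).trans (congrArg Prod.snd hc).symm)
    have hUbd : (P.u).map π = Matrix.blockDiagonal' (mkBlk hr M AQ VQ) := by
      ext ⟨ν, x⟩ ⟨μ, y⟩
      by_cases hνμ : ν = μ
      · subst hνμ
        rw [Matrix.blockDiagonal'_apply_eq]
        by_cases hlt : (ν : ℕ) < r - 1
        · rw [mkBlk_lt hr M AQ VQ hlt]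
          have hνρ : (ν, ν) ≠ ((⟨r - 1, hrlt⟩ : Fin r), (⟨r - 1, hrlt⟩ : Fin r)) := by
            intro hc
            have h2 : ν = (⟨r - 1, hrlt⟩ : Fin r) := congrArg Prod.fst hc
            have h3 : (ν : ℕ) = r - 1 := congrArg Fin.val h2
            omega
          rcases x with j | j <;> rcases y with k | k
          · rfl
          · show π (P.u ⟨ν, .inl j⟩ ⟨ν, .inr k⟩) = biM (AQ ⟨ν.1, hlt⟩) (.inl j) (.inr k)
            rw [hπ0 _ (hmemB ν ν j k hνρ)]
            simp [biM]
          · show π (P.u ⟨ν, .inr j⟩ ⟨ν, .inl k⟩) = biM (AQ ⟨ν.1, hlt⟩) (.inr j) (.inl k)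
            rw [hπ0 _ (hmemC ν ν j k hνρ)]
            simp [biM]
          · show π (P.u ⟨ν, .inr j⟩ ⟨ν, .inr k⟩) = biM (AQ ⟨ν.1, hlt⟩) (.inr j) (.inr k)
            rw [entry_D_diag hq0 P.rel.2.2 ν j k, map_star]
            rfl
        · obtain ⟨nv, hnv⟩ := ν
          have hnv' : nv = r - 1 := by simp only [Fin.val_mk] at hlt; omega
          subst hnv'
          rw [mkBlk_last hr M AQ VQ hnv]
          rfl
      · rw [Matrix.blockDiagonal'_apply_ne _ _ _ hνμ]
        rcases x with j | j <;> rcases y with k | k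
        · exact hπ0 _ (hmemA _ _ _ _ hνμ)
        · exact hπ0 _ (hmemB _ _ _ _ (hpairne hνμ))
        · exact hπ0 _ (hmemC _ _ _ _ (hpairne hνμ))
        · exact hπ0 _ (hmemD _ _ _ _ hνμ)
    have hrelU0 : OrthRel (FCaseII r q M) ((P.u).map π) := OrthRel.mapHom π P.rel
    have hrelU : OrthRel (FCaseII r q M) (Matrix.blockDiagonal' (mkBlk hr M AQ VQ)) := by
      rw [← hUbd]; exact hrelU0
    have hblocks := (orthRel_blockDiagonal'_iff _).mp hrelU
    have relAQ : ∀ ν', BiUnitary (AQ ν') := by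
      intro ν'
      have h := hblocks (Fin.castLE (Nat.sub_le r 1) ν')
      rw [mkBlk_lt hr M AQ VQ
        (show ((Fin.castLE (Nat.sub_le r 1) ν' : Fin r) : ℕ) < r - 1 from ν'.2)] at h
      exact biUnitary_of_biM h.1 h.2.1
    have relVQ : OrthRel (symplJSum (M ⟨r - 1, hrlt⟩)) VQ := by
      have h := hblocks ⟨r - 1, hrlt⟩
      rw [mkBlk_last hr M AQ VQ hrlt] at h
      have hq1 : q ⟨r - 1, hrlt⟩ = 1 := hqlast
      rw [hq1, FblkC_one] at h
      exact h
    obtain ⟨ψQ, hψQ, -⟩ := B.universal Q AQ VQ relAQ relVQ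
    obtain ⟨χ, -, hχu⟩ := P.universal Q ((P.u).map π) hrelU0
    have h1 : ψQ.comp φ = χ := by
      refine hχu _ ?_
      intro a b
      show ψQ (φ (P.u a b)) = (P.u).map π a b
      rw [hφu a b, hUbd]
      obtain ⟨ν, x⟩ := a
      obtain ⟨μ, y⟩ := b
      by_cases hνμ : ν = μ
      · subst hνμ
        rw [Matrix.blockDiagonal'_apply_eq, Matrix.blockDiagonal'_apply_eq]
        by_cases hlt : (ν : ℕ) < r - 1
        · rw [mkBlk_lt hr M B.a B.v hlt, mkBlk_lt hr M AQ VQ hlt]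
          rcases x with j | j <;> rcases y with k | k
          · exact hψQ.1 ⟨ν.1, hlt⟩ j k
          · show ψQ 0 = (0 : Matrix _ _ Q) j k
            rw [map_zero]; rfl
          · show ψQ 0 = (0 : Matrix _ _ Q) j k
            rw [map_zero]; rfl
          · show ψQ (star (B.a ⟨ν.1, hlt⟩ j k)) = star (AQ ⟨ν.1, hlt⟩ j k)
            rw [map_star, hψQ.1 ⟨ν.1, hlt⟩ j k]
        · obtain ⟨nv, hnv⟩ := ν
          have hnv' : nv = r - 1 := by simp only [Fin.val_mk] at hlt; omega
          subst hnv'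
          rw [mkBlk_last hr M B.a B.v hnv, mkBlk_last hr M AQ VQ hnv]
          exact hψQ.2 x y
      · rw [Matrix.blockDiagonal'_apply_ne _ _ _ hνμ, Matrix.blockDiagonal'_apply_ne _ _ _ hνμ]
        exact map_zero ψQ
    have h2 : π = χ := hχu _ (fun a b => rfl)
    have hcomp : ψQ.comp φ = π := h1.trans h2.symm
    intro x hx
    have hx0 : φ x = 0 := hx
    have hπx : π x = 0 := by
      have := DFunLike.congr_fun hcomp x
      rw [← this]
      show ψQ (φ x) = 0
      rw [hx0, map_zero]
    exact (hkerπ x).mp hπx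
  refine ⟨φ, hsurj, ?_, ?_, ?_, ?_⟩
  · intro ν j k
    exact (hφu _ _).trans (hW_aa ν j k)
  · intro j k
    exact (hφu _ _).trans (hW_v (.inl j) (.inl k))
  · intro j k
    exact (hφu _ _).trans (hW_v (.inr j) (.inl k))
  · exact Set.Subset.antisymm hker2 hker1
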